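/- Let t > 0 be a real number and let A be a symmetric 3×3 real matrix in diagonal form. Suppose that for every rotation matrix a_+ ∈ SO(3), the conjugated matrix Ã = a_+^{-1} A a_+ satisfies the two equations 2Ã_{12} - 2t^2 Ã_{23} Ã_{13} - t^2 Ã_{12}(Ã_{33} - Ã_{22}) = 0 and 2Ã_{13} - 2t^2 Ã_{23} Ã_{12} - t^2 Ã_{13}(Ã_{33} - Ã_{22}) = 0. Then A is a scalar multiple of the identity matrix. -/

import Mathlib

open Matrix

set_option maxHeartbeats 1000000 in
theorem stmt7 (t : ℝ) (ht : 0 < t) (A : Matrix (Fin 3) (Fin 3) ℝ)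
    (hsymm : A.IsSymm) (hdiag : A.IsDiag)
    (h : ∀ a : Matrix (Fin 3) (Fin 3) ℝ,
      a ∈ Matrix.specialOrthogonalGroup (Fin 3) ℝ →
      (2 * (a⁻¹ * A * a) 0 1
          - 2 * t ^ 2 * (a⁻¹ * A * a) 1 2 * (a⁻¹ * A * a) 0 2
          - t ^ 2 * (a⁻¹ * A * a) 0 1
              * ((a⁻¹ * A * a) 2 2 - (a⁻¹ * A * a) 1 1) = 0) ∧
      (2 * (a⁻¹ * A * a) 0 2
          - 2 * t ^ 2 * (a⁻¹ * A * a) 1 2 * (a⁻¹ * A * a) 0 1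
          - t ^ 2 * (a⁻¹ * A * a) 0 2
              * ((a⁻¹ * A * a) 2 2 - (a⁻¹ * A * a) 1 1) = 0)) :
    ∃ c : ℝ, A = c • (1 : Matrix (Fin 3) (Fin 3) ℝ) := by
  have h01 : A 0 1 = 0 := hdiag (by decide)
  have h02 : A 0 2 = 0 := hdiag (by decide)
  have h10 : A 1 0 = 0 := hdiag (by decide)
  have h12 : A 1 2 = 0 := hdiag (by decide)
  have h20 : A 2 0 = 0 := hdiag (by decide)
  have h21 : A 2 1 = 0 := hdiag (by decide)
  set x := A 0 0 with hx
  set y := A 1 1 with hy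
  set z := A 2 2 with hz
  have ht2 : (0:ℝ) < t ^ 2 := by positivity
  have key12 : ∀ c s : ℝ, c ^ 2 + s ^ 2 = 1 →
      c * s * (y - x) * (2 - t ^ 2 * (z - (s ^ 2 * x + c ^ 2 * y))) = 0 := by
    intro c s hcs
    set a : Matrix (Fin 3) (Fin 3) ℝ := !![c, -s, 0; s, c, 0; 0, 0, 1] with ha
    set b : Matrix (Fin 3) (Fin 3) ℝ := !![c, s, 0; -s, c, 0; 0, 0, 1] with hb
    have hright : a * b = 1 := by
      ext i j
      fin_cases i <;> fin_cases j <;>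
        simp only [ha, hb, Matrix.mul_apply, Fin.sum_univ_three] <;>
        norm_num [Matrix.cons_val_zero, Matrix.cons_val_one, Matrix.head_cons,
          Matrix.cons_val_two, Matrix.tail_cons, Matrix.head_fin_const, Matrix.one_apply, Fin.ext_iff] <;>
        nlinarith [hcs, sq_nonneg c, sq_nonneg s]
    have hstar : star a = b := by
      ext i j
      fin_cases i <;> fin_cases j <;> simp [ha, hb]
    have hmem : a ∈ Matrix.specialOrthogonalGroup (Fin 3) ℝ := by
      rw [Matrix.mem_specialOrthogonalGroup_iff]
      refine ⟨(Matrix.mem_orthogonalGroup_iff (Fin 3) ℝ).2 ?_, ?_⟩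
      · rw [← Matrix.conjTranspose_eq_transpose_of_trivial, ← Matrix.star_eq_conjTranspose, hstar]; exact hright
      · simp only [ha]
        norm_num [Matrix.det_fin_three, Matrix.cons_val_zero, Matrix.cons_val_one,
          Matrix.head_cons, Matrix.cons_val_two, Matrix.tail_cons, Matrix.head_fin_const]
        nlinarith [hcs, sq_nonneg c, sq_nonneg s]
    have hinv : a⁻¹ = b := Matrix.inv_eq_right_inv hright
    obtain ⟨e1, _⟩ := h a hmem
    rw [hinv] at e1
    simp only [Matrix.mul_apply, Fin.sum_univ_three] at e1
    norm_num [ha, hb, Matrix.cons_val_zero, Matrix.cons_val_one, Matrix.head_cons,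
      Matrix.cons_val_two, Matrix.tail_cons, Matrix.head_fin_const,
      h01, h02, h10, h12, h20, h21, ← hx, ← hy, ← hz] at e1
    linear_combination e1
  have key13 : ∀ c s : ℝ, c ^ 2 + s ^ 2 = 1 →
      c * s * (z - x) * (2 - t ^ 2 * ((s ^ 2 * x + c ^ 2 * z) - y)) = 0 := by
    intro c s hcs
    set a : Matrix (Fin 3) (Fin 3) ℝ := !![c, 0, -s; 0, 1, 0; s, 0, c] with ha
    set b : Matrix (Fin 3) (Fin 3) ℝ := !![c, 0, s; 0, 1, 0; -s, 0, c] with hb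
    have hright : a * b = 1 := by
      ext i j
      fin_cases i <;> fin_cases j <;>
        simp only [ha, hb, Matrix.mul_apply, Fin.sum_univ_three] <;>
        norm_num [Matrix.cons_val_zero, Matrix.cons_val_one, Matrix.head_cons,
          Matrix.cons_val_two, Matrix.tail_cons, Matrix.head_fin_const, Matrix.one_apply, Fin.ext_iff] <;>
        nlinarith [hcs, sq_nonneg c, sq_nonneg s]
    have hstar : star a = b := by
      ext i j
      fin_cases i <;> fin_cases j <;> simp [ha, hb]
    have hmem : a ∈ Matrix.specialOrthogonalGroup (Fin 3) ℝ := by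
      rw [Matrix.mem_specialOrthogonalGroup_iff]
      refine ⟨(Matrix.mem_orthogonalGroup_iff (Fin 3) ℝ).2 ?_, ?_⟩
      · rw [← Matrix.conjTranspose_eq_transpose_of_trivial, ← Matrix.star_eq_conjTranspose, hstar]; exact hright
      · simp only [ha]
        norm_num [Matrix.det_fin_three, Matrix.cons_val_zero, Matrix.cons_val_one,
          Matrix.head_cons, Matrix.cons_val_two, Matrix.tail_cons, Matrix.head_fin_const]
        nlinarith [hcs, sq_nonneg c, sq_nonneg s]
    have hinv : a⁻¹ = b := Matrix.inv_eq_right_inv hright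
    obtain ⟨_, e2⟩ := h a hmem
    rw [hinv] at e2
    simp only [Matrix.mul_apply, Fin.sum_univ_three] at e2
    norm_num [ha, hb, Matrix.cons_val_zero, Matrix.cons_val_one, Matrix.head_cons,
      Matrix.cons_val_two, Matrix.tail_cons, Matrix.head_fin_const,
      h01, h02, h10, h12, h20, h21, ← hx, ← hy, ← hz] at e2
    linear_combination e2
  have hxy : y = x := by
    by_contra hne
    have e1 := key12 (3/5) (4/5) (by norm_num)
    have e2 := key12 (5/13) (12/13) (by norm_num)
    have hne' : y - x ≠ 0 := sub_ne_zero.2 hne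
    have f1 : 2 - t ^ 2 * (z - ((4/5:ℝ) ^ 2 * x + (3/5:ℝ) ^ 2 * y)) = 0 := by
      rcases mul_eq_zero.1 e1 with h' | h'
      · rcases mul_eq_zero.1 h' with h'' | h''
        · norm_num at h''
        · exact absurd h'' hne'
      · exact h'
    have f2 : 2 - t ^ 2 * (z - ((12/13:ℝ) ^ 2 * x + (5/13:ℝ) ^ 2 * y)) = 0 := by
      rcases mul_eq_zero.1 e2 with h' | h'
      · rcases mul_eq_zero.1 h' with h'' | h''
        · norm_num at h''
        · exact absurd h'' hne'
      · exact h'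
    have hprod : t ^ 2 * (y - x) = 0 := by nlinarith [f1, f2]
    rcases mul_eq_zero.1 hprod with h' | h'
    · exact absurd h' (ne_of_gt ht2)
    · exact hne' h'
  have hxz : z = x := by
    by_contra hne
    have e1 := key13 (3/5) (4/5) (by norm_num)
    have e2 := key13 (5/13) (12/13) (by norm_num)
    have hne' : z - x ≠ 0 := sub_ne_zero.2 hne
    have f1 : 2 - t ^ 2 * (((4/5:ℝ) ^ 2 * x + (3/5:ℝ) ^ 2 * z) - y) = 0 := by
      rcases mul_eq_zero.1 e1 with h' | h'
      · rcases mul_eq_zero.1 h' with h'' | h''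
        · norm_num at h''
        · exact absurd h'' hne'
      · exact h'
    have f2 : 2 - t ^ 2 * (((12/13:ℝ) ^ 2 * x + (5/13:ℝ) ^ 2 * z) - y) = 0 := by
      rcases mul_eq_zero.1 e2 with h' | h'
      · rcases mul_eq_zero.1 h' with h'' | h''
        · norm_num at h''
        · exact absurd h'' hne'
      · exact h'
    have hprod : t ^ 2 * (z - x) = 0 := by nlinarith [f1, f2]
    rcases mul_eq_zero.1 hprod with h' | h'
    · exact absurd h' (ne_of_gt ht2)
    · exact hne' h'
  refine ⟨x, ?_⟩
  ext i j
  fin_cases i <;> fin_cases j <;>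
    simp [Matrix.one_apply, h01, h02, h10, h12, h20, h21, ← hx, ← hy, ← hz, hxy, hxz]
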